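/- Consider a relay network with c layers and limited intermediate randomness: for each j ∈ {1,…,c} let Y_{j,1},…,Y_{j,k_j} be random variables each taking values in a fixed finite set of cardinality d, write Ȳ_j = (Y_{j,1},…,Y_{j,k_j}); for j = 2,…,c let K_j be a random variable taking values in a set of cardinality at most d^{γ_j}, and assume H(Ȳ_j | Ȳ_{j−1}, K_j) = 0 for j = 2,…,c and H(M | Ȳ_j) = 0 for every j ∈ {1,…,c}, where M is a finitely-valued random variable. Define real numbers h^1 := k_1 and h^j := min( k_j , ((k_{j−1} − r_{j−1})/k_{j−1}) · h^{j−1} + γ_j ) for j = 2,…,c. Then max over all tuples (s_1,…,s_c) with s_j ⊆ {1,…,k_j} and |s_j| = r_j of I(M ; (Y_{j,i})_{j∈{1,…,c}, i∈s_j}) ≥ H(M) − (log d) · min_{1 ≤ j ≤ c} ((k_j − r_j)/k_j) · h^j. -/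

import Mathlib

open Finset

/-- Probability that the finitely-valued random variable `X` takes value `x`,
with respect to the probability mass function `p` on the finite sample space `Ω`. -/
noncomputable def pmfProb {Ω : Type*} [Fintype Ω] {α : Type*} [Fintype α] [DecidableEq α]
    (p : Ω → ℝ) (X : Ω → α) (x : α) : ℝ :=
  ∑ ω, if X ω = x then p ω else 0

/-- Shannon entropy (natural logarithm) of the random variable `X`. -/
noncomputable def entH {Ω : Type*} [Fintype Ω] {α : Type*} [Fintype α] [DecidableEq α]
    (p : Ω → ℝ) (X : Ω → α) : ℝ :=
  ∑ x, Real.negMulLog (pmfProb p X x)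

/-- Conditional Shannon entropy `H(X|Y) = H(X,Y) - H(Y)`. -/
noncomputable def condH {Ω : Type*} [Fintype Ω] {α β : Type*} [Fintype α] [DecidableEq α]
    [Fintype β] [DecidableEq β] (p : Ω → ℝ) (X : Ω → α) (Y : Ω → β) : ℝ :=
  entH p (fun ω => (X ω, Y ω)) - entH p Y

/-- Mutual information `I(X;Y) = H(X) + H(Y) - H(X,Y)`. -/
noncomputable def mutInfo {Ω : Type*} [Fintype Ω] {α β : Type*} [Fintype α] [DecidableEq α]
    [Fintype β] [DecidableEq β] (p : Ω → ℝ) (X : Ω → α) (Y : Ω → β) : ℝ :=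
  entH p X + entH p Y - entH p (fun ω => (X ω, Y ω))

/-- The conditional probability mass function given an event `E`. -/
noncomputable def condPMF {Ω : Type*} [Fintype Ω] (p : Ω → ℝ) (E : Ω → Prop)
    [DecidablePred E] : Ω → ℝ :=
  fun ω => if E ω then p ω / (∑ ω' ∈ Finset.univ.filter E, p ω') else 0


/-- The recursively defined quantities of the limited-randomness relay network:
`h^1 = k 1` and `h^j = min (k j) (((k (j-1) - r (j-1)) / k (j-1)) * h^(j-1) + γ j)`. -/
noncomputable def hseq (k r γ : ℕ → ℕ) : ℕ → ℝ
  | 0 => 0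
  | 1 => (k 1 : ℝ)
  | (j + 2) => min ((k (j + 2) : ℕ) : ℝ)
      (((k (j + 1) : ℝ) - (r (j + 1) : ℝ)) / (k (j + 1) : ℝ) * hseq k r γ (j + 1)
        + (γ (j + 2) : ℝ))

set_option linter.unusedSectionVars false
section Found
open Real Finset

variable {Ω : Type*} [Fintype Ω] {α : Type*} [Fintype α] [DecidableEq α]
  {β : Type*} [Fintype β] [DecidableEq β] {γ' : Type*} [Fintype γ'] [DecidableEq γ']

lemma pmfProb_nonneg {p : Ω → ℝ} (hp : ∀ ω, 0 ≤ p ω) (X : Ω → α) (x : α) :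
    0 ≤ pmfProb p X x :=
  Finset.sum_nonneg fun ω _ => by by_cases h : X ω = x <;> simp [pmfProb, h, hp ω]

lemma pmfProb_sum (p : Ω → ℝ) (X : Ω → α) : ∑ x, pmfProb p X x = ∑ ω, p ω := by
  unfold pmfProb
  rw [Finset.sum_comm]
  exact Finset.sum_congr rfl fun ω _ => by simp

lemma pmfProb_comp (p : Ω → ℝ) (X : Ω → α) (g : α → β) :
    pmfProb p (fun ω => g (X ω)) = pmfProb (pmfProb p X) g := by
  funext b
  unfold pmfProb
  have key : ∀ a : α, (if g a = b then (∑ ω, if X ω = a then p ω else 0) else 0)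
      = ∑ ω, if X ω = a then (if g a = b then p ω else 0) else 0 := fun a => by
    by_cases h : g a = b <;> simp [h]
  simp only [key]
  rw [Finset.sum_comm]
  refine Finset.sum_congr rfl fun ω _ => ?_
  simp [Finset.sum_ite_eq]

lemma pmfProb_id (q : α → ℝ) (a : α) : pmfProb q id a = q a := by
  simp [pmfProb]

lemma entH_comp (p : Ω → ℝ) (X : Ω → α) (g : α → β) :
    entH p (fun ω => g (X ω)) = entH (pmfProb p X) g := by
  unfold entH
  rw [pmfProb_comp]

lemma entH_eq_entH_id (p : Ω → ℝ) (X : Ω → α) : entH p X = entH (pmfProb p X) id := by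
  have := entH_comp p X id
  simpa using this

/-- pull a function through marginals -/
lemma sum_pmfProb_mul (q : α → ℝ) (f : α → β) (F : β → ℝ) :
    ∑ b, pmfProb q f b * F b = ∑ a, q a * F (f a) := by
  unfold pmfProb
  have : ∀ b, (∑ a, if f a = b then q a else 0) * F b
      = ∑ a, if f a = b then q a * F b else 0 := by
    intro b; rw [Finset.sum_mul]; exact Finset.sum_congr rfl fun a _ => by
      by_cases h : f a = b <;> simp [h]
  simp_rw [this]
  rw [Finset.sum_comm]
  refine Finset.sum_congr rfl fun a _ => ?_
  simp

lemma entH_eq_neg_sum (q : α → ℝ) (f : α → β) :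
    entH q f = -∑ a, q a * Real.log (pmfProb q f (f a)) := by
  unfold entH
  rw [← sum_pmfProb_mul q f (fun b => Real.log (pmfProb q f b)), ← Finset.sum_neg_distrib]
  exact Finset.sum_congr rfl fun b _ => by rw [Real.negMulLog]; ring

lemma negMulLog_sum_le {ι : Type*} (t : Finset ι) (w : ι → ℝ) (hw : ∀ i ∈ t, 0 ≤ w i) :
    Real.negMulLog (∑ i ∈ t, w i) ≤ ∑ i ∈ t, Real.negMulLog (w i) := by
  have h1 : Real.negMulLog (∑ i ∈ t, w i)
      = ∑ i ∈ t, -(w i * Real.log (∑ j ∈ t, w j)) := by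
    rw [Real.negMulLog, Finset.sum_neg_distrib, ← Finset.sum_mul, neg_mul]
  rw [h1]
  refine Finset.sum_le_sum fun i hi => ?_
  rcases eq_or_lt_of_le (hw i hi) with h0 | h0
  · rw [← h0]; simp [Real.negMulLog]
  · rw [Real.negMulLog, neg_mul]
    apply neg_le_neg
    exact mul_le_mul_of_nonneg_left
      (Real.log_le_log h0 (Finset.single_le_sum hw hi)) h0.le
  
lemma gibbs {ι : Type*} [Fintype ι] (P Q : ι → ℝ) (hP : ∀ i, 0 ≤ P i)
    (hQ : ∀ i, 0 ≤ Q i) (h : ∀ i, 0 < P i → 0 < Q i) :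
    ∑ i, P i * (Real.log (Q i) - Real.log (P i)) ≤ ∑ i, Q i - ∑ i, P i := by
  rw [← Finset.sum_sub_distrib]
  refine Finset.sum_le_sum fun i _ => ?_
  rcases eq_or_lt_of_le (hP i) with h0 | h0
  · rw [← h0]; simpa using hQ i
  · have hQi := h i h0
    have : Real.log (Q i) - Real.log (P i) = Real.log (Q i / P i) := by
      rw [Real.log_div hQi.ne' h0.ne']
    rw [this]
    calc P i * Real.log (Q i / P i) ≤ P i * (Q i / P i - 1) := by
          apply mul_le_mul_of_nonneg_left (Real.log_le_sub_one_of_pos (by positivity)) (hP i)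
      _ = Q i - P i := by field_simp

end Found

section Dist
open Real Finset

variable {α : Type*} [Fintype α] [DecidableEq α]
  {β : Type*} [Fintype β] [DecidableEq β]

lemma le_pmfProb_apply (q : α → ℝ) (hq : ∀ a, 0 ≤ q a) (f : α → β) (t : α) :
    q t ≤ pmfProb q f (f t) := by
  unfold pmfProb
  have := Finset.single_le_sum (f := fun a => if f a = f t then q a else 0)
    (fun a _ => by by_cases h : f a = f t <;> simp [h, hq a]) (Finset.mem_univ t)
  simpa using this

lemma entH_map_le (q : α → ℝ) (hq : ∀ a, 0 ≤ q a) (f : α → β) :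
    entH q f ≤ entH q id := by
  unfold entH
  have step1 : ∀ b : β, Real.negMulLog (pmfProb q f b)
      ≤ ∑ a, (if f a = b then Real.negMulLog (q a) else 0) := by
    intro b
    have h := negMulLog_sum_le Finset.univ (fun a => if f a = b then q a else 0)
      (fun a _ => by by_cases h : f a = b <;> simp [h, hq a])
    refine le_trans (le_of_eq rfl) (h.trans (le_of_eq ?_))
    exact Finset.sum_congr rfl fun a _ => by by_cases h : f a = b <;> simp [h]
  calc ∑ b, Real.negMulLog (pmfProb q f b)
      ≤ ∑ b, ∑ a, (if f a = b then Real.negMulLog (q a) else 0) :=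
        Finset.sum_le_sum fun b _ => step1 b
    _ = ∑ a, Real.negMulLog (q a) := by
        rw [Finset.sum_comm]; exact Finset.sum_congr rfl fun a _ => by simp
    _ = ∑ x, Real.negMulLog (pmfProb q id x) := by simp [pmfProb_id]

lemma entH_id_le_log_card (q : α → ℝ) (hq0 : ∀ a, 0 ≤ q a) (hq1 : ∑ a, q a = 1) :
    entH q id ≤ Real.log (Fintype.card α) := by
  have hcard : 0 < Fintype.card α := by
    rcases Nat.eq_zero_or_pos (Fintype.card α) with h | h
    · have : IsEmpty α := Fintype.card_eq_zero_iff.mp h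
      rw [Finset.univ_eq_empty] at hq1
      simp at hq1
    · exact h
  set n : ℝ := (Fintype.card α : ℝ) with hn
  have hnpos : 0 < n := by rw [hn]; exact_mod_cast hcard
  have hg := gibbs q (fun _ => n⁻¹) hq0 (fun _ => by positivity)
    (fun i _ => by positivity)
  simp only [Finset.sum_const, Finset.card_univ, nsmul_eq_mul] at hg
  have hsum : (Fintype.card α : ℝ) * n⁻¹ = 1 := by
    field_simp
    exact hn.symm
  rw [hsum, hq1] at hg
  have : ∑ a, q a * (Real.log n⁻¹ - Real.log (q a))
      = -Real.log n * (∑ a, q a) + ∑ a, Real.negMulLog (q a) := by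
    rw [Finset.mul_sum, ← Finset.sum_add_distrib]
    refine Finset.sum_congr rfl fun a _ => by
      rw [Real.log_inv, Real.negMulLog]; ring
  rw [this, hq1] at hg
  have : entH q id = ∑ a, Real.negMulLog (q a) := by
    unfold entH; simp [pmfProb_id]
  rw [this]
  linarith

variable {A : Type*} [Fintype A] [DecidableEq A] {B : Type*} [Fintype B] [DecidableEq B]
  {C : Type*} [Fintype C] [DecidableEq C]

lemma marg_fst_collapse (q : A × B × C → ℝ) (c : C) :
    ∑ a, pmfProb q (fun t => (t.1, t.2.2)) (a, c) = pmfProb q (fun t => t.2.2) c := by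
  have h : pmfProb q (fun t : A × B × C => t.2.2) c
      = pmfProb (pmfProb q (fun t => (t.1, t.2.2))) (fun ac : A × C => ac.2) c :=
    congrFun (pmfProb_comp q (fun t : A × B × C => (t.1, t.2.2)) (fun ac : A × C => ac.2)) c
  rw [h]
  show _ = ∑ x : A × C, if x.2 = c then pmfProb q (fun t => (t.1, t.2.2)) x else 0
  rw [Fintype.sum_prod_type]
  refine Finset.sum_congr rfl fun a _ => ?_
  simp

lemma marg_snd_collapse (q : A × B × C → ℝ) (c : C) :
    ∑ b, pmfProb q (fun t => t.2) (b, c) = pmfProb q (fun t => t.2.2) c := by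
  have h : pmfProb q (fun t : A × B × C => t.2.2) c
      = pmfProb (pmfProb q (fun t => t.2)) (fun bc : B × C => bc.2) c :=
    congrFun (pmfProb_comp q (fun t : A × B × C => t.2) (fun bc : B × C => bc.2)) c
  rw [h]
  show _ = ∑ x : B × C, if x.2 = c then pmfProb q (fun t => t.2) x else 0
  rw [Fintype.sum_prod_type]
  refine Finset.sum_congr rfl fun b _ => ?_
  simp

/-- Strong subadditivity at the distribution level:
`H(A,B,C) + H(C) ≤ H(A,C) + H(B,C)`. -/
lemma dist_ssa (q : A × B × C → ℝ) (hq0 : ∀ t, 0 ≤ q t) (hq1 : ∑ t, q t = 1) :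
    entH q id + entH q (fun t => t.2.2)
      ≤ entH q (fun t => (t.1, t.2.2)) + entH q (fun t => t.2) := by
  classical
  set mA := pmfProb q (fun t => (t.1, t.2.2)) with hmA
  set mB := pmfProb q (fun t => t.2) with hmB
  set mC := pmfProb q (fun t => t.2.2) with hmC
  have hmA0 : ∀ x, 0 ≤ mA x := pmfProb_nonneg hq0 _
  have hmB0 : ∀ x, 0 ≤ mB x := pmfProb_nonneg hq0 _
  have hmC0 : ∀ x, 0 ≤ mC x := pmfProb_nonneg hq0 _
  set Q : A × B × C → ℝ := fun t => mA (t.1, t.2.2) * mB t.2 / mC t.2.2 with hQdef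
  have hQ0 : ∀ t, 0 ≤ Q t := fun t => by
    have := hmA0 (t.1, t.2.2); have := hmB0 t.2; have := hmC0 t.2.2; positivity
  have hqA : ∀ t, q t ≤ mA (t.1, t.2.2) := fun t =>
    le_pmfProb_apply q hq0 (fun t => (t.1, t.2.2)) t
  have hqB : ∀ t, q t ≤ mB t.2 := fun t => le_pmfProb_apply q hq0 (fun t => t.2) t
  have hqC : ∀ t, q t ≤ mC t.2.2 := fun t => le_pmfProb_apply q hq0 (fun t => t.2.2) t
  have hQpos : ∀ t, 0 < q t → 0 < Q t := by
    intro t ht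
    have h1 := lt_of_lt_of_le ht (hqA t)
    have h2 := lt_of_lt_of_le ht (hqB t)
    have h3 := lt_of_lt_of_le ht (hqC t)
    exact div_pos (mul_pos h1 h2) h3
  -- sum of Q is at most 1
  have hsumC : ∑ c, mC c = 1 := by rw [hmC, pmfProb_sum, hq1]
  have hQsum : ∑ t, Q t ≤ 1 := by
    have e1 : ∑ t, Q t = ∑ c, ∑ a, ∑ b, mA (a, c) * mB (b, c) / mC c := by
      rw [Fintype.sum_prod_type, Finset.sum_comm, Fintype.sum_prod_type, Finset.sum_comm]
      exact Finset.sum_congr rfl fun c _ => Finset.sum_comm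
    have e2 : ∀ c : C, ∑ a, ∑ b, mA (a, c) * mB (b, c) / mC c
        = (∑ a, mA (a, c)) * (∑ b, mB (b, c)) / mC c := by
      intro c
      rw [Finset.sum_mul, Finset.sum_div]
      exact Finset.sum_congr rfl fun a _ => by rw [Finset.mul_sum, Finset.sum_div]
    rw [e1]
    simp_rw [e2]
    calc ∑ c, (∑ a, mA (a, c)) * (∑ b, mB (b, c)) / mC c
        ≤ ∑ c, mC c := by
          refine Finset.sum_le_sum fun c _ => ?_
          rw [marg_fst_collapse, marg_snd_collapse]
          rcases eq_or_lt_of_le (hmC0 c) with h0 | h0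
          · rw [← h0]; simp
          · rw [mul_div_assoc, div_self h0.ne', mul_one]
      _ = 1 := hsumC
  -- Gibbs
  have hg := gibbs q Q hq0 hQ0 hQpos
  rw [hq1] at hg
  have hg2 : ∑ t, q t * (Real.log (Q t) - Real.log (q t)) ≤ 0 := by linarith
  -- entropy identities
  have eid : entH q id = -∑ t, q t * Real.log (q t) := by
    rw [entH_eq_neg_sum]
    congr 1
    exact Finset.sum_congr rfl fun t _ => by rw [pmfProb_id]; rfl
  have eA : entH q (fun t => (t.1, t.2.2)) = -∑ t, q t * Real.log (mA (t.1, t.2.2)) :=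
    entH_eq_neg_sum q _
  have eB : entH q (fun t => t.2) = -∑ t, q t * Real.log (mB t.2) := entH_eq_neg_sum q _
  have eC : entH q (fun t => t.2.2) = -∑ t, q t * Real.log (mC t.2.2) := entH_eq_neg_sum q _
  have key : ∑ t, q t * (Real.log (Q t) - Real.log (q t))
      = ∑ t, q t * (Real.log (mA (t.1, t.2.2)) + Real.log (mB t.2)
          - Real.log (mC t.2.2) - Real.log (q t)) := by
    refine Finset.sum_congr rfl fun t _ => ?_
    rcases eq_or_lt_of_le (hq0 t) with h0 | h0
    · rw [← h0]; ring
    · have h1 := lt_of_lt_of_le h0 (hqA t)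
      have h2 := lt_of_lt_of_le h0 (hqB t)
      have h3 := lt_of_lt_of_le h0 (hqC t)
      rw [hQdef]
      rw [Real.log_div (by positivity) h3.ne', Real.log_mul h1.ne' h2.ne']
  rw [key] at hg2
  have expand2 : ∑ t, q t * (Real.log (mA (t.1, t.2.2)) + Real.log (mB t.2)
          - Real.log (mC t.2.2) - Real.log (q t))
      = (∑ t, q t * Real.log (mA (t.1, t.2.2))) + (∑ t, q t * Real.log (mB t.2))
        - (∑ t, q t * Real.log (mC t.2.2)) - ∑ t, q t * Real.log (q t) := by
    have : ∀ t : A × B × C, q t * (Real.log (mA (t.1, t.2.2)) + Real.log (mB t.2)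
          - Real.log (mC t.2.2) - Real.log (q t))
        = q t * Real.log (mA (t.1, t.2.2)) + q t * Real.log (mB t.2)
          - q t * Real.log (mC t.2.2) - q t * Real.log (q t) := fun t => by ring
    simp_rw [this]
    rw [Finset.sum_sub_distrib, Finset.sum_sub_distrib, Finset.sum_add_distrib]
  rw [expand2] at hg2
  rw [eid, eA, eB, eC]
  linarith

end Dist

set_option maxHeartbeats 800000
section OmegaLevel
open Real Finset

variable {Ω : Type*} [Fintype Ω] {α : Type*} [Fintype α] [DecidableEq α]
  {β : Type*} [Fintype β] [DecidableEq β] {δ : Type*} [Fintype δ] [DecidableEq δ]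
  {p : Ω → ℝ}

lemma nonempty_of_sum_one (hp1 : ∑ ω, p ω = 1) : Nonempty Ω := by
  by_contra h
  rw [not_nonempty_iff] at h
  rw [Finset.univ_eq_empty] at hp1
  simp at hp1

lemma entH_fun_le (hp : ∀ ω, 0 ≤ p ω) (X : Ω → α) (g : α → β) :
    entH p (fun ω => g (X ω)) ≤ entH p X := by
  rw [entH_comp, entH_eq_entH_id p X]
  exact entH_map_le _ (pmfProb_nonneg hp X) g

lemma entH_fun_inj (hp : ∀ ω, 0 ≤ p ω) [Nonempty α] (X : Ω → α) (g : α → β)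
    (hg : Function.Injective g) :
    entH p (fun ω => g (X ω)) = entH p X := by
  obtain ⟨h, hh⟩ := hg.hasLeftInverse
  refine le_antisymm (entH_fun_le hp X g) ?_
  have h2 := entH_fun_le hp (fun ω => g (X ω)) h
  have : (fun ω => h (g (X ω))) = X := funext fun ω => hh (X ω)
  rwa [this] at h2

lemma condH_nonneg (hp : ∀ ω, 0 ≤ p ω) (X : Ω → α) (Y : Ω → β) :
    0 ≤ condH p X Y := by
  have := entH_fun_le hp (fun ω => (X ω, Y ω)) Prod.snd
  unfold condH
  linarith

lemma condH_pair_le (hp : ∀ ω, 0 ≤ p ω) (hp1 : ∑ ω, p ω = 1)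
    (X : Ω → α) (Y : Ω → β) (Z : Ω → δ) :
    condH p X (fun ω => (Y ω, Z ω)) ≤ condH p X Z := by
  set T : Ω → α × β × δ := fun ω => (X ω, Y ω, Z ω) with hT
  set q := pmfProb p T with hq
  have hq0 : ∀ t, 0 ≤ q t := pmfProb_nonneg hp T
  have hq1 : ∑ t, q t = 1 := by rw [hq, pmfProb_sum, hp1]
  have e1 : entH p (fun ω => (X ω, (Y ω, Z ω))) = entH q id := entH_comp p T id
  have e2 : entH p (fun ω => (Y ω, Z ω)) = entH q (fun t => t.2) :=
    entH_comp p T (fun t => t.2)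
  have e3 : entH p (fun ω => (X ω, Z ω)) = entH q (fun t => (t.1, t.2.2)) :=
    entH_comp p T (fun t => (t.1, t.2.2))
  have e4 : entH p Z = entH q (fun t => t.2.2) := entH_comp p T (fun t => t.2.2)
  have := dist_ssa q hq0 hq1
  unfold condH
  rw [e1, e2, e3, e4]
  linarith

lemma entH_pair_assoc (hp : ∀ ω, 0 ≤ p ω) (hp1 : ∑ ω, p ω = 1)
    (A : Ω → α) (B : Ω → β) (W : Ω → δ) :
    entH p (fun ω => ((A ω, B ω), W ω)) = entH p (fun ω => (A ω, (B ω, W ω))) := by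
  have hΩ : Nonempty Ω := nonempty_of_sum_one hp1
  obtain ⟨ω0⟩ := hΩ
  have : Nonempty ((α × β) × δ) := ⟨((A ω0, B ω0), W ω0)⟩
  have h := entH_fun_inj hp (fun ω => ((A ω, B ω), W ω))
    (fun t : (α × β) × δ => (t.1.1, (t.1.2, t.2)))
    (fun t t' ht => by
      obtain ⟨⟨a, b⟩, w⟩ := t; obtain ⟨⟨a', b'⟩, w'⟩ := t'
      simp only [Prod.mk.injEq] at ht ⊢
      exact ⟨⟨ht.1, ht.2.1⟩, ht.2.2⟩)
  exact h.symm

lemma condH_chain (hp : ∀ ω, 0 ≤ p ω) (hp1 : ∑ ω, p ω = 1)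
    (A : Ω → α) (B : Ω → β) (W : Ω → δ) :
    condH p (fun ω => (A ω, B ω)) W
      = condH p A (fun ω => (B ω, W ω)) + condH p B W := by
  unfold condH
  rw [entH_pair_assoc hp hp1]
  ring

lemma condH_cond_fun_le (hp : ∀ ω, 0 ≤ p ω) (hp1 : ∑ ω, p ω = 1)
    (X : Ω → α) (Y : Ω → β) (g : β → δ) :
    condH p X Y ≤ condH p X (fun ω => g (Y ω)) := by
  have hΩ : Nonempty Ω := nonempty_of_sum_one hp1
  obtain ⟨ω0⟩ := hΩ
  have hβ : Nonempty β := ⟨Y ω0⟩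
  have hinj : Function.Injective (fun y : β => (y, g y)) := fun y y' h => by
    simpa using congrArg Prod.fst h
  have hinj2 : Function.Injective (fun t : α × β => (t.1, (t.2, g t.2))) := by
    intro t t' h
    simp only [Prod.mk.injEq] at h
    exact Prod.ext h.1 h.2.1
  have e : condH p X Y = condH p X (fun ω => (Y ω, g (Y ω))) := by
    unfold condH
    have e1 : entH p (fun ω => (X ω, (Y ω, g (Y ω))))
        = entH p (fun ω => (X ω, Y ω)) := by
      have : Nonempty (α × β) := ⟨(X ω0, Y ω0)⟩
      exact entH_fun_inj hp (fun ω => (X ω, Y ω)) (fun t : α × β => (t.1, (t.2, g t.2))) hinj2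
    have e2 : entH p (fun ω => (Y ω, g (Y ω))) = entH p Y :=
      entH_fun_inj hp Y (fun y : β => (y, g y)) hinj
    rw [e1, e2]
  rw [e]
  exact condH_pair_le hp hp1 X Y (fun ω => g (Y ω))

lemma entH_unit (hp1 : ∑ ω, p ω = 1) : entH p (fun _ : Ω => ()) = 0 := by
  unfold entH pmfProb
  simp [hp1]

lemma condH_le_entH (hp : ∀ ω, 0 ≤ p ω) (hp1 : ∑ ω, p ω = 1)
    (X : Ω → α) (Y : Ω → β) : condH p X Y ≤ entH p X := by
  have h := condH_cond_fun_le hp hp1 X Y (fun _ => ())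
  have hΩ : Nonempty Ω := nonempty_of_sum_one hp1
  obtain ⟨ω0⟩ := hΩ
  have : Nonempty α := ⟨X ω0⟩
  have e : condH p X (fun _ => ()) = entH p X := by
    unfold condH
    rw [entH_unit hp1, sub_zero]
    exact entH_fun_inj hp X (fun x => (x, ())) (fun x x' h => by simpa using h)
  rw [← e]
  exact h

lemma condH_det (hp : ∀ ω, 0 ≤ p ω) (hp1 : ∑ ω, p ω = 1)
    (X : Ω → α) (Y : Ω → β) (g : β → α) (hXY : ∀ ω, X ω = g (Y ω)) :
    condH p X Y = 0 := by
  have hΩ : Nonempty Ω := nonempty_of_sum_one hp1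
  obtain ⟨ω0⟩ := hΩ
  have : Nonempty β := ⟨Y ω0⟩
  unfold condH
  have e : (fun ω => (X ω, Y ω)) = fun ω => (g (Y ω), Y ω) :=
    funext fun ω => by rw [hXY ω]
  rw [e]
  rw [entH_fun_inj hp Y (fun y => (g y, y)) (fun y y' h => by simpa using congrArg Prod.snd h)]
  exact sub_self _

lemma condH_arg_fun_le (hp : ∀ ω, 0 ≤ p ω) (X : Ω → α) (Y : Ω → β) (g : α → δ) :
    condH p (fun ω => g (X ω)) Y ≤ condH p X Y := by
  unfold condH
  have := entH_fun_le hp (fun ω => (X ω, Y ω)) (fun t => (g t.1, t.2))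
  apply sub_le_sub_right
  exact this

lemma condH_arg_eq (hp : ∀ ω, 0 ≤ p ω) (X : Ω → α) (X' : Ω → δ) (Y : Ω → β)
    (g : α → δ) (h : δ → α) (hg : ∀ ω, X' ω = g (X ω)) (hh : ∀ ω, X ω = h (X' ω)) :
    condH p X' Y = condH p X Y := by
  refine le_antisymm ?_ ?_
  · have := condH_arg_fun_le hp X Y g
    rwa [show (fun ω => g (X ω)) = X' from funext fun ω => (hg ω).symm] at this
  · have := condH_arg_fun_le hp X' Y h
    rwa [show (fun ω => h (X' ω)) = X from funext fun ω => (hh ω).symm] at this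

lemma condH_cond_eq (hp : ∀ ω, 0 ≤ p ω) (hp1 : ∑ ω, p ω = 1)
    (X : Ω → α) (Y : Ω → β) (Y' : Ω → δ)
    (g : β → δ) (h : δ → β) (hg : ∀ ω, Y' ω = g (Y ω)) (hh : ∀ ω, Y ω = h (Y' ω)) :
    condH p X Y' = condH p X Y := by
  refine le_antisymm ?_ ?_
  · have := condH_cond_fun_le hp hp1 X Y' h
    rwa [show (fun ω => h (Y' ω)) = Y from funext fun ω => (hh ω).symm] at this
  · have := condH_cond_fun_le hp hp1 X Y g
    rwa [show (fun ω => g (Y ω)) = Y' from funext fun ω => (hg ω).symm] at this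

lemma entH_le_log_card (hp : ∀ ω, 0 ≤ p ω) (hp1 : ∑ ω, p ω = 1) (X : Ω → α) :
    entH p X ≤ Real.log (Fintype.card α) := by
  rw [entH_eq_entH_id]
  exact entH_id_le_log_card _ (pmfProb_nonneg hp X) (by rw [pmfProb_sum, hp1])

lemma condH_mono_left (hp : ∀ ω, 0 ≤ p ω) (X : Ω → α) (B : Ω → β) (W : Ω → δ) :
    condH p X W ≤ condH p (fun ω => (X ω, B ω)) W := by
  unfold condH
  apply sub_le_sub_right
  exact entH_fun_le hp (fun ω => ((X ω, B ω), W ω)) (fun t => (t.1.1, t.2))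

end OmegaLevel

section Masked
open Real Finset

/-- Masked tuple: reveals `Z i` exactly for `i ∈ s`. -/
def mskT {Ω α : Type*} {n : ℕ} (Z : Fin n → Ω → α) (s : Finset (Fin n)) :
    Ω → (Fin n → Option α) := fun ω i => if i ∈ s then some (Z i ω) else none

variable {Ω : Type*} [Fintype Ω] {α : Type*} [Fintype α] [DecidableEq α]
  {β : Type*} [Fintype β] [DecidableEq β] {p : Ω → ℝ}

/-- Top-r subset lemma: some `r`-subset captures at least an `r/n` fraction of the sum. -/
lemma exists_top_subset {ι : Type*} [Fintype ι] [DecidableEq ι] (a : ι → ℝ)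
    (ha : ∀ i, 0 ≤ a i) (r : ℕ) (hr : r ≤ Fintype.card ι) :
    ∃ s : Finset ι, s.card = r ∧
      (r : ℝ) * ∑ i, a i ≤ (Fintype.card ι : ℝ) * ∑ i ∈ s, a i := by
  classical
  obtain ⟨s0, hs0sub, hs0⟩ := Finset.exists_subset_card_eq
    (show r ≤ (Finset.univ : Finset ι).card by simpa using hr)
  have hSne : (Finset.univ.powersetCard r : Finset (Finset ι)).Nonempty :=
    ⟨s0, by simp [Finset.mem_powersetCard, hs0sub, hs0]⟩
  obtain ⟨s, hsS, hmax⟩ := Finset.exists_max_image _ (fun t => ∑ i ∈ t, a i) hSne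
  rw [Finset.mem_powersetCard] at hsS
  obtain ⟨hssub, hscard⟩ := hsS
  refine ⟨s, hscard, ?_⟩
  -- key exchange property
  have key : ∀ i ∈ s, ∀ j ∉ s, a j ≤ a i := by
    intro i hi j hj
    by_contra hlt
    push_neg at hlt
    have hj' : j ∉ s.erase i := fun h => hj (Finset.mem_of_mem_erase h)
    have hcard' : (insert j (s.erase i)).card = r := by
      have h1 : 1 ≤ r := hscard ▸ Finset.card_pos.mpr ⟨i, hi⟩
      rw [Finset.card_insert_of_notMem hj', Finset.card_erase_of_mem hi, hscard]
      omega
    have hmem : insert j (s.erase i) ∈ Finset.univ.powersetCard r := by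
      simp [Finset.mem_powersetCard, hcard']
    have hle := hmax _ hmem
    rw [Finset.sum_insert hj'] at hle
    have herase : ∑ x ∈ s.erase i, a x = (∑ x ∈ s, a x) - a i := by
      rw [← Finset.add_sum_erase s a hi]; ring
    rw [herase] at hle
    linarith
  -- exchange inequality
  have hcompl : ∑ i ∈ s, a i + ∑ i ∈ sᶜ, a i = ∑ i, a i := Finset.sum_add_sum_compl s a
  have hcardc : (sᶜ.card : ℝ) = (Fintype.card ι : ℝ) - r := by
    rw [Finset.card_compl, hscard, Nat.cast_sub hr]
  have hdouble : (r : ℝ) * ∑ j ∈ sᶜ, a j ≤ ((Fintype.card ι : ℝ) - r) * ∑ i ∈ s, a i := by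
    have h1 : ∀ i ∈ s, ∑ j ∈ sᶜ, a j ≤ (sᶜ.card : ℝ) * a i := by
      intro i hi
      calc ∑ j ∈ sᶜ, a j ≤ ∑ _j ∈ sᶜ, a i :=
            Finset.sum_le_sum fun j hj => key i hi j (by simpa using hj)
        _ = (sᶜ.card : ℝ) * a i := by rw [Finset.sum_const, nsmul_eq_mul]
    calc (r : ℝ) * ∑ j ∈ sᶜ, a j = ∑ _i ∈ s, ∑ j ∈ sᶜ, a j := by
          rw [Finset.sum_const, nsmul_eq_mul, hscard]
      _ ≤ ∑ i ∈ s, (sᶜ.card : ℝ) * a i := Finset.sum_le_sum h1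
      _ = ((Fintype.card ι : ℝ) - r) * ∑ i ∈ s, a i := by
          rw [← Finset.mul_sum, hcardc]
  nlinarith [Finset.sum_nonneg (fun i (_ : i ∈ s) => ha i)]

variable {n : ℕ}

/-- Chain rule for masked tuples. -/
lemma condH_mskT_chain (hp : ∀ ω, 0 ≤ p ω) (hp1 : ∑ ω, p ω = 1) [Nonempty α]
    (Z : Fin n → Ω → α) (W : Ω → β) (s : Finset (Fin n)) :
    condH p (mskT Z s) W
      = ∑ i ∈ s, condH p (Z i)
          (fun ω => (mskT Z (s.filter (fun x => x < i)) ω, W ω)) := by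
  classical
  induction s using Finset.strongInduction with
  | _ s ih =>
    rcases s.eq_empty_or_nonempty with rfl | hne
    · rw [Finset.sum_empty]
      exact condH_det hp hp1 _ W (fun _ => (fun _ => (none : Option α)))
        (fun ω => funext fun l => by simp [mskT])
    · set i := s.max' hne with hidef
      have hi : i ∈ s := s.max'_mem hne
      have hss : s.erase i ⊂ s := Finset.erase_ssubset hi
      have filt_eq : s.filter (fun x => x < i) = s.erase i := by
        ext x
        simp only [Finset.mem_filter, Finset.mem_erase]
        constructor
        · rintro ⟨hx, hlt⟩; exact ⟨ne_of_lt hlt, hx⟩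
        · rintro ⟨hne', hx⟩; exact ⟨hx, lt_of_le_of_ne (s.le_max' x hx) hne'⟩
      have big : condH p (mskT Z s) W
          = condH p (fun ω => (Z i ω, mskT Z (s.erase i) ω)) W := by
        refine condH_arg_eq hp (fun ω => (Z i ω, mskT Z (s.erase i) ω)) (mskT Z s) W
          (fun t => fun l => if l = i then some t.1 else t.2 l)
          (fun m => ((m i).getD (Classical.arbitrary α), fun l => if l = i then none else m l))
          (fun ω => funext fun l => ?_) (fun ω => ?_)
        · by_cases hl : l = i
          · subst hl; simp [mskT, hi]
          · simp only [mskT]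
            rw [if_neg hl]
            by_cases hls : l ∈ s
            · rw [if_pos hls, if_pos (Finset.mem_erase.mpr ⟨hl, hls⟩)]
            · rw [if_neg hls, if_neg (fun h => hls (Finset.mem_of_mem_erase h))]
        · refine Prod.ext ?_ (funext fun l => ?_)
          · simp [mskT, hi]
          · by_cases hl : l = i
            · subst hl; simp [mskT]
            · simp [mskT, hl, Finset.mem_erase]
      rw [big, condH_chain hp hp1 (Z i) (mskT Z (s.erase i)) W, ih (s.erase i) hss]
      rw [← Finset.add_sum_erase s _ hi]
      congr 1
      · rw [filt_eq]
      · refine Finset.sum_congr rfl fun l hl => ?_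
        have : s.filter (fun x => x < l) = (s.erase i).filter (fun x => x < l) := by
          ext x
          simp only [Finset.mem_filter, Finset.mem_erase]
          constructor
          · rintro ⟨hx, hlt⟩
            refine ⟨⟨?_, hx⟩, hlt⟩
            rintro rfl
            have hle := s.le_max' l (Finset.mem_of_mem_erase hl)
            rw [← hidef] at hle
            exact absurd (lt_of_lt_of_le hlt hle) (lt_irrefl i)
          · rintro ⟨⟨_, hx⟩, hlt⟩; exact ⟨hx, hlt⟩
        rw [this]

/-- Selection lemma: a good `r`-subset to eavesdrop. -/
lemma exists_good_subset (hp : ∀ ω, 0 ≤ p ω) (hp1 : ∑ ω, p ω = 1) [Nonempty α]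
    (Z : Fin n → Ω → α) (W : Ω → β) (r : ℕ) (hr : r ≤ n) :
    ∃ s : Finset (Fin n), s.card = r ∧
      condH p (fun ω (i : Fin n) => Z i ω) (fun ω => (mskT Z s ω, W ω))
        ≤ (((n : ℝ) - r) / n) * condH p (fun ω (i : Fin n) => Z i ω) W := by
  classical
  rcases Nat.eq_zero_or_pos n with rfl | hn
  · refine ⟨∅, by simp [Nat.le_zero.mp hr], ?_⟩
    have h0 : condH p (fun ω (i : Fin 0) => Z i ω) (fun ω => (mskT Z ∅ ω, W ω)) = 0 :=
      condH_det hp hp1 _ _ (fun _ => (fun i : Fin 0 => i.elim0)) (fun ω => funext fun i => i.elim0)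
    rw [h0]
    simp
  set ZZ : Ω → (Fin n → α) := fun ω (i : Fin n) => Z i ω with hZZ
  set a : Fin n → ℝ := fun i => condH p (Z i)
    (fun ω => (mskT Z (Finset.univ.filter (fun x => x < i)) ω, W ω)) with ha
  have ha0 : ∀ i, 0 ≤ a i := fun i => condH_nonneg hp _ _
  obtain ⟨s, hscard, hstop⟩ := exists_top_subset a ha0 r (by simpa using hr)
  rw [Fintype.card_fin] at hstop
  refine ⟨s, hscard, ?_⟩
  -- identify condH ZZ W with the masked-universe version and the chain rule sum
  have eqZZ : condH p (mskT Z Finset.univ) W = condH p ZZ W :=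
    condH_arg_eq hp ZZ (mskT Z Finset.univ) W
      (fun v => fun l => some (v l))
      (fun m => fun l => (m l).getD (Classical.arbitrary α))
      (fun ω => funext fun l => by simp [mskT, hZZ])
      (fun ω => funext fun l => by simp [mskT, hZZ])
  have hA : condH p ZZ W = ∑ i, a i := by
    rw [← eqZZ, condH_mskT_chain hp hp1 Z W Finset.univ]
  -- chain splitting
  have eq2 : condH p (fun ω => (ZZ ω, mskT Z s ω)) W = condH p ZZ W :=
    condH_arg_eq hp ZZ (fun ω => (ZZ ω, mskT Z s ω)) W
      (fun v => (v, fun l => if l ∈ s then some (v l) else none))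
      (fun t => t.1)
      (fun ω => by
        refine Prod.ext rfl (funext fun l => ?_)
        simp [mskT, hZZ])
      (fun ω => rfl)
  have hchain := condH_chain hp hp1 ZZ (mskT Z s) W
  -- lower bound for the revealed part
  have hrev : ∑ i ∈ s, a i ≤ condH p (mskT Z s) W := by
    rw [condH_mskT_chain hp hp1 Z W s]
    refine Finset.sum_le_sum fun i hi => ?_
    have hle := condH_cond_fun_le hp hp1 (Z i)
      (fun ω => (mskT Z (Finset.univ.filter (fun x => x < i)) ω, W ω))
      (fun t => ((fun l => if l ∈ s then t.1 l else none), t.2))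
    refine le_trans hle (le_of_eq ?_)
    congr 1
    funext ω
    refine Prod.ext (funext fun l => ?_) rfl
    simp only [mskT]
    by_cases hls : l ∈ s <;> by_cases hlt : l < i <;>
      simp [hls, hlt, Finset.mem_filter]
  -- put everything together
  have hnpos : (0 : ℝ) < n := by exact_mod_cast hn
  have hmain : condH p ZZ (fun ω => (mskT Z s ω, W ω))
      = condH p ZZ W - condH p (mskT Z s) W := by
    linarith [hchain, eq2]
  have hdiv : (r : ℝ) * (∑ i, a i) / n ≤ ∑ i ∈ s, a i := by
    rw [div_le_iff₀ hnpos]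
    linarith
  have hexp : ((n : ℝ) - r) / n * condH p ZZ W
      = condH p ZZ W - (r : ℝ) * (∑ i, a i) / n := by
    rw [hA]
    field_simp
  linarith [hmain, hrev, hdiv, hexp]
end Masked

section Main
open Real Finset

/-- The tuple of random variables of layer `j`. -/
def YbarD {Ω α : Type*} (k : ℕ → ℕ) (Y : (j : ℕ) → Fin (k j) → Ω → α) (j : ℕ) :
    Ω → (Fin (k j) → α) := fun ω i => Y j i ω

/-- The eavesdropped (masked) variables of all layers up to `j`. -/
def WvarD {Ω α : Type*} (k : ℕ → ℕ) (Y : (j : ℕ) → Fin (k j) → Ω → α)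
    (s : (l : ℕ) → Finset (Fin (k l))) (j : ℕ) :
    Ω → ((l : ↥(Finset.Icc 1 j)) → Fin (k l.1) → Option α) :=
  fun ω l => mskT (Y l.1) (s l.1) ω

/-- paper's Theorem 5, condition (C2'): relay network with `c` layers and
limited intermediate randomness. Layer `j` is a deterministic function of the previous
layer together with the node randomness `K j` taking at most `d ^ γ j` values, and the
message `M` is recoverable from every layer. Then there is a tuple of eavesdropped edge
sets `s j` with `|s j| = r j` such that
`I(M ; (Y_{j,i})_{j,i∈s j}) ≥ H(M) - log d * min_j ((k j - r j)/(k j)) * h^j`. -/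
theorem relay_network_limited_rand_leak_lower_bound {Ω α μ : Type*} [Fintype Ω]
    [Fintype α] [DecidableEq α] [Fintype μ] [DecidableEq μ]
    {κ : ℕ → Type*} [∀ j, Fintype (κ j)] [∀ j, DecidableEq (κ j)]
    (p : Ω → ℝ) (hp : ∀ ω, 0 ≤ p ω) (hp1 : ∑ ω, p ω = 1)
    (c d : ℕ) (hc : 1 ≤ c) (hd : 1 ≤ d) (hα : Fintype.card α = d)
    (k r γ : ℕ → ℕ) (hk : ∀ j ∈ Finset.Icc 1 c, 1 ≤ k j)
    (hr : ∀ j ∈ Finset.Icc 1 c, r j ≤ k j)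
    (Y : (j : ℕ) → Fin (k j) → Ω → α) (K : (j : ℕ) → Ω → κ j) (M : Ω → μ)
    (hκ : ∀ j, 2 ≤ j → j ≤ c → Fintype.card (κ j) ≤ d ^ γ j)
    (hdet : ∀ j, 2 ≤ j → j ≤ c →
      condH p (fun ω (i : Fin (k j)) => Y j i ω)
        (fun ω => ((fun i : Fin (k (j - 1)) => Y (j - 1) i ω), K j ω)) = 0)
    (hdec : ∀ j ∈ Finset.Icc 1 c,
      condH p M (fun ω (i : Fin (k j)) => Y j i ω) = 0) :
    ∃ s : (j : ℕ) → Finset (Fin (k j)),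
      (∀ j ∈ Finset.Icc 1 c, (s j).card = r j) ∧
      entH p M - Real.log d *
          (Finset.Icc 1 c).inf' (Finset.nonempty_Icc.mpr hc)
            (fun j => ((k j : ℝ) - (r j : ℝ)) / (k j : ℝ) * hseq k r γ j)
        ≤ mutInfo p M
            (fun ω (j : ↥(Finset.Icc 1 c)) (i : ↥(s j.1)) => Y j.1 i.1 ω) := by
  classical
  have hΩ : Nonempty Ω := nonempty_of_sum_one hp1
  obtain ⟨ω0⟩ := hΩ
  have hαne : Nonempty α := Fintype.card_pos_iff.mp (by rw [hα]; omega)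
  have hlogd : (0:ℝ) ≤ Real.log d := Real.log_nonneg (by exact_mod_cast hd)
  -- entropy of a layer tuple is at most `k j * log d`
  have hent_tuple : ∀ j : ℕ, entH p (YbarD k Y j) ≤ (k j : ℝ) * Real.log d := by
    intro j
    have h1 := entH_le_log_card hp hp1 (YbarD k Y j)
    have h2 : (Fintype.card (Fin (k j) → α) : ℝ) = ((d ^ k j : ℕ) : ℝ) := by
      rw [Fintype.card_fun, Fintype.card_fin, hα]
    rw [h2] at h1
    calc entH p (YbarD k Y j) ≤ Real.log ((d ^ k j : ℕ) : ℝ) := h1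
      _ = (k j : ℝ) * Real.log d := by push_cast; rw [Real.log_pow]
  -- main induction on layers
  have KEY : ∀ j, 1 ≤ j → j ≤ c →
      ∃ s : (l : ℕ) → Finset (Fin (k l)),
        (∀ l, 1 ≤ l → l ≤ j → (s l).card = r l) ∧
        (∀ l, 1 ≤ l → l ≤ j →
          condH p (YbarD k Y l) (WvarD k Y s l)
            ≤ Real.log d * (((k l : ℝ) - (r l : ℝ)) / (k l : ℝ) * hseq k r γ l)) := by
    intro j hj
    induction j, hj using Nat.le_induction with
    | base =>
      intro _
      have h1c : (1:ℕ) ∈ Finset.Icc 1 c := Finset.mem_Icc.mpr ⟨le_refl 1, hc⟩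
      obtain ⟨t, htcard, htle⟩ :=
        exists_good_subset hp hp1 (Y 1) (fun _ : Ω => ()) (r 1) (hr 1 h1c)
      set s : (l : ℕ) → Finset (Fin (k l)) :=
        Function.update (fun l => (∅ : Finset (Fin (k l)))) 1 t with hs
      have hs1 : s 1 = t := Function.update_self _ _ _
      refine ⟨s, ?_, ?_⟩
      · intro l hl1 hl2
        have : l = 1 := by omega
        subst this
        rw [hs1, htcard]
      · intro l hl1 hl2
        have hl : l = 1 := by omega
        subst hl
        have step1 : condH p (YbarD k Y 1) (WvarD k Y s 1)
            ≤ condH p (YbarD k Y 1) (fun ω => (mskT (Y 1) (s 1) ω, ())) := by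
          exact condH_cond_fun_le hp hp1 (YbarD k Y 1) (WvarD k Y s 1)
            (fun w => (w ⟨1, Finset.mem_Icc.mpr ⟨le_refl 1, le_refl 1⟩⟩, ()))
        rw [hs1] at step1
        have hk1 : (0:ℝ) < (k 1 : ℝ) := by exact_mod_cast hk 1 h1c
        have hr1 : (r 1 : ℝ) ≤ (k 1 : ℝ) := by exact_mod_cast hr 1 h1c
        have hW0 : condH p (YbarD k Y 1) (fun _ : Ω => ()) ≤ (k 1 : ℝ) * Real.log d :=
          le_trans (condH_le_entH hp hp1 _ _) (hent_tuple 1)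
        have hcoef : (0:ℝ) ≤ ((k 1 : ℝ) - (r 1 : ℝ)) / (k 1 : ℝ) :=
          div_nonneg (by linarith) hk1.le
        have htle' : condH p (YbarD k Y 1) (fun ω => (mskT (Y 1) t ω, ()))
            ≤ (((k 1 : ℝ) - (r 1 : ℝ)) / (k 1 : ℝ)) * condH p (YbarD k Y 1) (fun _ : Ω => ()) := by
          exact htle
        have hmul := mul_le_mul_of_nonneg_left hW0 hcoef
        have hh1 : hseq k r γ 1 = (k 1 : ℝ) := rfl
        calc condH p (YbarD k Y 1) (WvarD k Y s 1)
            ≤ (((k 1 : ℝ) - (r 1 : ℝ)) / (k 1 : ℝ)) * ((k 1 : ℝ) * Real.log d) :=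
              le_trans step1 (le_trans htle' hmul)
          _ = Real.log d * (((k 1 : ℝ) - (r 1 : ℝ)) / (k 1 : ℝ) * hseq k r γ 1) := by
              rw [hh1]; ring
    | succ j hj ih =>
      intro hjc
      obtain ⟨s, hcard, hbound⟩ := ih (by omega)
      have hjmem : (j+1) ∈ Finset.Icc 1 c := Finset.mem_Icc.mpr ⟨by omega, hjc⟩
      have hjmem' : j ∈ Finset.Icc 1 c := Finset.mem_Icc.mpr ⟨hj, by omega⟩
      have hkj1 : (0:ℝ) < (k (j+1) : ℝ) := by exact_mod_cast hk (j+1) hjmem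
      have hrj1 : (r (j+1) : ℝ) ≤ (k (j+1) : ℝ) := by exact_mod_cast hr (j+1) hjmem
      have hkj : (0:ℝ) < (k j : ℝ) := by exact_mod_cast hk j hjmem'
      have hrj : (r j : ℝ) ≤ (k j : ℝ) := by exact_mod_cast hr j hjmem'
      -- Step 1: conditional entropy of next layer given current eavesdropped info
      have hKnonempty : Nonempty (κ (j+1)) := ⟨K (j+1) ω0⟩
      have hKent : entH p (K (j+1)) ≤ (γ (j+1) : ℝ) * Real.log d := by
        have h1 := entH_le_log_card hp hp1 (K (j+1))
        have hcard1 : (1:ℕ) ≤ Fintype.card (κ (j+1)) := Fintype.card_pos_iff.mpr hKnonempty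
        have h2 : Real.log (Fintype.card (κ (j+1)))
            ≤ Real.log ((d ^ γ (j+1) : ℕ) : ℝ) := by
          apply Real.log_le_log (by exact_mod_cast hcard1)
          exact_mod_cast hκ (j+1) (by omega) hjc
        calc entH p (K (j+1)) ≤ Real.log (Fintype.card (κ (j+1))) := h1
          _ ≤ Real.log ((d ^ γ (j+1) : ℕ) : ℝ) := h2
          _ = (γ (j+1) : ℝ) * Real.log d := by push_cast; rw [Real.log_pow]
      have hdet1 : condH p (YbarD k Y (j+1))
          (fun ω => (YbarD k Y j ω, K (j+1) ω)) = 0 := hdet (j+1) (by omega) hjc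
      -- H(Ybar (j+1) | W j) ≤ H(Ybar j | W j) + γ log d
      have hstepA : condH p (YbarD k Y (j+1)) (WvarD k Y s j)
          ≤ condH p (YbarD k Y j) (WvarD k Y s j) + (γ (j+1) : ℝ) * Real.log d := by
        have c1 : condH p (YbarD k Y (j+1)) (WvarD k Y s j)
            ≤ condH p (fun ω => (YbarD k Y (j+1) ω, (YbarD k Y j ω, K (j+1) ω)))
                (WvarD k Y s j) :=
          condH_mono_left hp _ _ _
        have c2 := condH_chain hp hp1 (YbarD k Y (j+1))
          (fun ω => (YbarD k Y j ω, K (j+1) ω)) (WvarD k Y s j)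
        have c3 : condH p (YbarD k Y (j+1))
            (fun ω => ((YbarD k Y j ω, K (j+1) ω), WvarD k Y s j ω)) ≤ 0 := by
          have h := condH_cond_fun_le hp hp1 (YbarD k Y (j+1))
            (fun ω => ((YbarD k Y j ω, K (j+1) ω), WvarD k Y s j ω))
            (fun t => t.1)
          rw [hdet1] at h
          exact h
        -- H(Ybar j, K | W) ≤ H(Ybar j | W) + H(K)
        have c4 : condH p (fun ω => (YbarD k Y j ω, K (j+1) ω)) (WvarD k Y s j)
            ≤ condH p (YbarD k Y j) (WvarD k Y s j) + entH p (K (j+1)) := by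
          have swap : condH p (fun ω => (YbarD k Y j ω, K (j+1) ω)) (WvarD k Y s j)
              = condH p (fun ω => (K (j+1) ω, YbarD k Y j ω)) (WvarD k Y s j) :=
            condH_arg_eq hp (fun ω => (K (j+1) ω, YbarD k Y j ω))
              (fun ω => (YbarD k Y j ω, K (j+1) ω)) (WvarD k Y s j)
              (fun t => (t.2, t.1)) (fun t => (t.2, t.1))
              (fun ω => rfl) (fun ω => rfl)
          have ch := condH_chain hp hp1 (K (j+1)) (YbarD k Y j) (WvarD k Y s j)
          have hK := condH_le_entH hp hp1 (K (j+1))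
            (fun ω => (YbarD k Y j ω, WvarD k Y s j ω))
          rw [swap, ch]
          have hYb := condH_nonneg hp (YbarD k Y j) (WvarD k Y s j)
          linarith
        have hKB := hKent
        linarith
      -- H(Ybar (j+1) | W j) ≤ k (j+1) * log d
      have hstepB : condH p (YbarD k Y (j+1)) (WvarD k Y s j)
          ≤ (k (j+1) : ℝ) * Real.log d :=
        le_trans (condH_le_entH hp hp1 _ _) (hent_tuple (j+1))
      -- combine with hseq
      obtain ⟨m, rfl⟩ : ∃ m, j = m + 1 := ⟨j - 1, by omega⟩
      have hseq_succ : hseq k r γ (m + 1 + 1)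
          = min ((k (m+2) : ℝ))
              (((k (m+1) : ℝ) - (r (m+1) : ℝ)) / (k (m+1) : ℝ) * hseq k r γ (m+1)
                + (γ (m+2) : ℝ)) := by
        rfl
      have hstepC : condH p (YbarD k Y (m+1+1)) (WvarD k Y s (m+1))
          ≤ Real.log d * hseq k r γ (m+1+1) := by
        rw [hseq_succ]
        rcases le_total ((k (m+2) : ℝ))
          (((k (m+1) : ℝ) - (r (m+1) : ℝ)) / (k (m+1) : ℝ) * hseq k r γ (m+1)
            + (γ (m+2) : ℝ)) with hmin | hmin
        · rw [min_eq_left hmin]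
          calc condH p (YbarD k Y (m+1+1)) (WvarD k Y s (m+1))
              ≤ (k (m+1+1) : ℝ) * Real.log d := hstepB
            _ = Real.log d * (k (m+2) : ℝ) := by ring_nf
        · rw [min_eq_right hmin]
          have hb := hbound (m+1) (by omega) (le_refl _)
          calc condH p (YbarD k Y (m+1+1)) (WvarD k Y s (m+1))
              ≤ condH p (YbarD k Y (m+1)) (WvarD k Y s (m+1))
                  + (γ (m+1+1) : ℝ) * Real.log d := hstepA
            _ ≤ Real.log d * (((k (m+1) : ℝ) - (r (m+1) : ℝ)) / (k (m+1) : ℝ)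
                  * hseq k r γ (m+1)) + (γ (m+2) : ℝ) * Real.log d := by
                have : (m+1+1) = (m+2) := rfl
                linarith [hb]
            _ = Real.log d * (((k (m+1) : ℝ) - (r (m+1) : ℝ)) / (k (m+1) : ℝ)
                  * hseq k r γ (m+1) + (γ (m+2) : ℝ)) := by ring
      -- Step 2: select the eavesdropped subset of layer j+1
      obtain ⟨t, htcard, htle⟩ :=
        exists_good_subset hp hp1 (Y (m+1+1)) (WvarD k Y s (m+1)) (r (m+1+1))
          (hr (m+1+1) hjmem)
      set s' : (l : ℕ) → Finset (Fin (k l)) := Function.update s (m+1+1) t with hs'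
      have hs'top : s' (m+1+1) = t := Function.update_self _ _ _
      have hs'lo : ∀ l, l ≤ m+1 → s' l = s l := by
        intro l hl
        exact Function.update_of_ne (by omega) _ _
      -- the W tuples below level j+1 are unchanged
      have hWeq : ∀ l, l ≤ m+1 → WvarD k Y s' l = WvarD k Y s l := by
        intro l hl
        funext ω li
        have hli : li.1 ≤ m + 1 := by
          have := li.2
          rw [Finset.mem_Icc] at this
          omega
        show mskT (Y li.1) (s' li.1) ω = mskT (Y li.1) (s li.1) ω
        rw [hs'lo li.1 hli]
      refine ⟨s', ?_, ?_⟩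
      · intro l hl1 hl2
        rcases Nat.lt_or_ge l (m+1+1) with hcase | hcase
        · rw [hs'lo l (by omega)]
          exact hcard l hl1 (by omega)
        · have : l = m+1+1 := by omega
          subst this
          rw [hs'top, htcard]
      · intro l hl1 hl2
        rcases Nat.lt_or_ge l (m+1+1) with hcase | hcase
        · rw [hWeq l (by omega)]
          exact hbound l hl1 (by omega)
        · have : l = m+1+1 := by omega
          subst this
          -- H(Ybar (j+1) | W' (j+1)) ≤ H(Ybar (j+1) | mskT t, W j)
          have hproj : condH p (YbarD k Y (m+1+1)) (WvarD k Y s' (m+1+1))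
              ≤ condH p (YbarD k Y (m+1+1))
                  (fun ω => (mskT (Y (m+1+1)) t ω, WvarD k Y s (m+1) ω)) := by
            have h := condH_cond_fun_le hp hp1 (YbarD k Y (m+1+1)) (WvarD k Y s' (m+1+1))
              (fun w => (w ⟨m+1+1, Finset.mem_Icc.mpr ⟨by omega, le_refl _⟩⟩,
                fun li : ↥(Finset.Icc 1 (m+1)) =>
                  w ⟨li.1, by
                    have := li.2
                    rw [Finset.mem_Icc] at this ⊢
                    omega⟩))
            refine le_trans h (le_of_eq ?_)
            congr 1
            funext ω
            refine Prod.ext ?_ (funext fun li => ?_)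
            · show mskT (Y (m+1+1)) (s' (m+1+1)) ω = mskT (Y (m+1+1)) t ω
              rw [hs'top]
            · show mskT (Y li.1) (s' li.1) ω = mskT (Y li.1) (s li.1) ω
              have hli : li.1 ≤ m + 1 := by
                have := li.2
                rw [Finset.mem_Icc] at this
                omega
              rw [hs'lo li.1 hli]
          have hcoef : (0:ℝ) ≤ ((k (m+1+1) : ℝ) - (r (m+1+1) : ℝ)) / (k (m+1+1) : ℝ) :=
            div_nonneg (by linarith) hkj1.le
          calc condH p (YbarD k Y (m+1+1)) (WvarD k Y s' (m+1+1))
              ≤ (((k (m+1+1) : ℝ) - (r (m+1+1) : ℝ)) / (k (m+1+1) : ℝ))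
                  * condH p (YbarD k Y (m+1+1)) (WvarD k Y s (m+1)) :=
                le_trans hproj htle
            _ ≤ (((k (m+1+1) : ℝ) - (r (m+1+1) : ℝ)) / (k (m+1+1) : ℝ))
                  * (Real.log d * hseq k r γ (m+1+1)) :=
                mul_le_mul_of_nonneg_left hstepC hcoef
            _ = Real.log d * (((k (m+1+1) : ℝ) - (r (m+1+1) : ℝ)) / (k (m+1+1) : ℝ)
                  * hseq k r γ (m+1+1)) := by ring
  -- Final assembly
  obtain ⟨s, hcard, hbound⟩ := KEY c hc (le_refl c)
  refine ⟨s, fun j hj => hcard j (Finset.mem_Icc.mp hj).1 (Finset.mem_Icc.mp hj).2, ?_⟩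
  obtain ⟨j0, hj0mem, hj0val⟩ := Finset.exists_mem_eq_inf' (Finset.nonempty_Icc.mpr hc)
    (fun j => ((k j : ℝ) - (r j : ℝ)) / (k j : ℝ) * hseq k r γ j)
  have hj0' := Finset.mem_Icc.mp hj0mem
  set Wfin : Ω → ((j : ↥(Finset.Icc 1 c)) → (i : ↥(s j.1)) → α) :=
    fun ω j i => Y j.1 i.1 ω with hWfin
  -- mutInfo = H(M) - H(M | Wfin)
  have hmut : mutInfo p M Wfin = entH p M - condH p M Wfin := by
    unfold mutInfo condH
    ring
  rw [hmut]
  have hgoal : condH p M Wfin ≤ Real.log d *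
      (((k j0 : ℝ) - (r j0 : ℝ)) / (k j0 : ℝ) * hseq k r γ j0) := by
    -- (a) Wfin determines Wvar s c
    have ha : condH p M Wfin ≤ condH p M (WvarD k Y s c) := by
      have h := condH_cond_fun_le hp hp1 M Wfin
        (fun w => fun (l : ↥(Finset.Icc 1 c)) (i : Fin (k l.1)) =>
          if hmem : i ∈ s l.1 then some (w l ⟨i, hmem⟩) else none)
      refine le_trans h (le_of_eq ?_)
      congr 1
    -- (b) chain through Ybar j0
    have hb : condH p M (WvarD k Y s c)
        ≤ condH p (YbarD k Y j0) (WvarD k Y s c)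
          + condH p M (fun ω => (YbarD k Y j0 ω, WvarD k Y s c ω)) := by
      have h1 : condH p M (WvarD k Y s c)
          ≤ condH p (fun ω => (M ω, YbarD k Y j0 ω)) (WvarD k Y s c) :=
        condH_mono_left hp _ _ _
      have h2 := condH_chain hp hp1 M (YbarD k Y j0) (WvarD k Y s c)
      linarith
    -- (c) M is determined by Ybar j0
    have hcz : condH p M (fun ω => (YbarD k Y j0 ω, WvarD k Y s c ω)) ≤ 0 := by
      have h := condH_cond_fun_le hp hp1 M
        (fun ω => (YbarD k Y j0 ω, WvarD k Y s c ω)) (fun t => t.1)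
      have hz : condH p M (YbarD k Y j0) = 0 := hdec j0 hj0mem
      rw [hz] at h
      exact h
    -- (d) Wvar s c determines Wvar s j0
    have hdd : condH p (YbarD k Y j0) (WvarD k Y s c)
        ≤ condH p (YbarD k Y j0) (WvarD k Y s j0) := by
      have h := condH_cond_fun_le hp hp1 (YbarD k Y j0) (WvarD k Y s c)
        (fun w => fun (l : ↥(Finset.Icc 1 j0)) =>
          w ⟨l.1, by
            have := l.2
            rw [Finset.mem_Icc] at this ⊢
            omega⟩)
      exact le_trans h (le_of_eq rfl)
    have he := hbound j0 hj0'.1 hj0'.2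
    linarith
  rw [hj0val]
  linarith
end Main
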